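/- For every pair of odd integers k_0 and k with 3 ≤ k_0 ≤ k, there exists an integer m and reals ω_1, …, ω_m such that Σ_{i∈[m]} ω_i^ℓ = 0 for every odd integer ℓ ≠ k_0 with 3 ≤ ℓ ≤ k, and Σ_{i∈[m]} ω_i^{k_0} > 0. -/

import Mathlib

open MeasureTheory

/-- A kernel: a bounded measurable symmetric real function (its values on `[0,1]²` are the
relevant ones). -/
structure Kernel : Type where
  toFun : ℝ → ℝ → ℝ
  symm : ∀ x y, toFun x y = toFun y x
  measurable : Measurable (Function.uncurry toFun)
  bounded : ∃ C : ℝ, ∀ x y, |toFun x y| ≤ C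

/-- A kernel is nonzero if it is not a.e. zero on `[0,1]²`. -/
def Kernel.Nonzero (U : Kernel) : Prop :=
  ¬ (∀ᵐ p : ℝ × ℝ ∂(volume.restrict ((Set.Icc (0:ℝ) 1) ×ˢ (Set.Icc (0:ℝ) 1))),
      U.toFun p.1 p.2 = 0)

/-- A kernel is balanced if its marginals vanish a.e. -/
def Kernel.Balanced (U : Kernel) : Prop :=
  ∀ᵐ x ∂(volume.restrict (Set.Icc (0:ℝ) 1)), (∫ y in Set.Icc (0:ℝ) 1, U.toFun x y) = 0

/-- The product of the kernel values over the edges of a graph. -/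
noncomputable def edgeProd {V : Type} (H : SimpleGraph V) (U : Kernel) (x : V → ℝ) : ℝ :=
  ∏ᶠ e ∈ H.edgeSet, Sym2.lift ⟨fun u v => U.toFun (x u) (x v), fun u v => U.symm (x u) (x v)⟩ e

/-- The homomorphism density `t(H, U)` of a finite simple graph in a kernel. -/
noncomputable def homDensity {V : Type} [Fintype V] (H : SimpleGraph V) (U : Kernel) : ℝ :=
  ∫ x in (Set.univ.pi fun _ : V => Set.Icc (0:ℝ) 1), edgeProd H U x

open Classical in
/-- The rooted homomorphism density `t^H_U(z)` of a graph `H` rooted at `w`. -/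
noncomputable def rootedDensity {V : Type} [Fintype V] (H : SimpleGraph V) (w : V)
    (U : Kernel) (z : ℝ) : ℝ :=
  ∫ x in (Set.univ.pi fun _ : {v : V // v ≠ w} => Set.Icc (0:ℝ) 1),
    edgeProd H U (fun v => if h : v = w then z else x ⟨v, h⟩)

/-- A bundled finite simple graph. -/
structure FinGraph : Type 1 where
  V : Type
  fintypeV : Fintype V
  G : SimpleGraph V

attribute [instance] FinGraph.fintypeV

def FinGraph.of {V : Type} [h : Fintype V] (G : SimpleGraph V) : FinGraph := ⟨V, h, G⟩

noncomputable def FinGraph.density (G : FinGraph) (U : Kernel) : ℝ := homDensity G.G U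

/-- Number of edges of a bundled finite graph. -/
noncomputable def FinGraph.edges (G : FinGraph) : ℕ := G.G.edgeSet.ncard

instance finiteSubgraph {V : Type} [Finite V] (G : SimpleGraph V) : Finite G.Subgraph := by
  classical
  exact Finite.of_injective (fun G' => (G'.verts, G'.Adj))
    (fun a b h => SimpleGraph.Subgraph.ext (congrArg Prod.fst h) (congrArg Prod.snd h))

open Classical in
/-- The multiset of all subgraphs of `G` having exactly `l` edges. -/
noncomputable def FinGraph.subs (G : FinGraph) (l : ℕ) : Multiset FinGraph :=
  ((Set.toFinite {G' : G.G.Subgraph | G'.edgeSet.ncard = l}).toFinset.val).map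
    fun G' => FinGraph.of G'.coe

/-- `D` is an `l`-deck: a multiset of graphs each with exactly `l` edges. -/
def IsDeck (D : Multiset FinGraph) (l : ℕ) : Prop := ∀ G ∈ D, G.edges = l

/-- The `l`-deck of a deck `D`: all `l`-edge subgraphs of the graphs of `D`. -/
noncomputable def subDeck (D : Multiset FinGraph) (l : ℕ) : Multiset FinGraph :=
  D.bind fun G => G.subs l

/-- `s_D(H)`: the number of subgraphs isomorphic to `H` of the graphs in `D`. -/
noncomputable def sD (D : Multiset FinGraph) (H : FinGraph) : ℕ :=
  (D.map fun G => Set.ncard {G' : G.G.Subgraph | Nonempty (G'.coe ≃g H.G)}).sum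

/-- The coefficient `c^D_{U,l} = Σ_{G ∈ D} Σ_{H' ∈ G[l]} t(H', U)`. -/
noncomputable def coeff (D : Multiset FinGraph) (U : Kernel) (l : ℕ) : ℝ :=
  ((subDeck D l).map fun H => H.density U).sum

/-- All the coefficients `c^D_{U,2}, c^D_{U,4}, …, c^D_{U,l}` vanish. -/
def AllCoeffZero (D : Multiset FinGraph) (U : Kernel) (l : ℕ) : Prop :=
  ∀ k, Even k → 0 < k → k ≤ l → coeff D U k = 0

/-- Among `c^D_{U,2}, c^D_{U,4}, …, c^D_{U,l}` not all vanish and the first nonzero one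
is positive. -/
def FirstNonzeroPos (D : Multiset FinGraph) (U : Kernel) (l : ℕ) : Prop :=
  ∃ k, Even k ∧ 0 < k ∧ k ≤ l ∧ 0 < coeff D U k ∧
    ∀ j, Even j → 0 < j → j < k → coeff D U j = 0

/-- Among `c^D_{U,2}, c^D_{U,4}, …, c^D_{U,l}` not all vanish and the first nonzero one
is negative. -/
def FirstNonzeroNeg (D : Multiset FinGraph) (U : Kernel) (l : ℕ) : Prop :=
  ∃ k, Even k ∧ 0 < k ∧ k ≤ l ∧ coeff D U k < 0 ∧
    ∀ j, Even j → 0 < j → j < k → coeff D U j = 0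

def ClassI (D : Multiset FinGraph) (l : ℕ) : Prop :=
  ∀ U : Kernel, U.Nonzero → FirstNonzeroPos D U l

def ClassII (D : Multiset FinGraph) (l : ℕ) : Prop :=
  ∃ U : Kernel, FirstNonzeroNeg D U l

def ClassIII (D : Multiset FinGraph) (l : ℕ) : Prop :=
  (∃ U : Kernel, U.Nonzero ∧ AllCoeffZero D U l) ∧
  ∀ U : Kernel, AllCoeffZero D U l ∨ FirstNonzeroPos D U l

/-- The cycle `C_n` as a bundled graph. -/
def cycleF (n : ℕ) : FinGraph := FinGraph.of (SimpleGraph.cycleGraph n)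

/-- The path `P_n` with `n` edges as a bundled graph. -/
def pathF (n : ℕ) : FinGraph := FinGraph.of (SimpleGraph.pathGraph (n+1))

/-- Gluing two graphs by identifying the vertex `v` of `G` with the vertex `w` of `H`. -/
def glue {V W : Type} (G : SimpleGraph V) (H : SimpleGraph W) (v : V) (w : W) :
    SimpleGraph (V ⊕ {x : W // x ≠ w}) where
  Adj a b :=
    Sum.elim (fun a => Sum.elim (fun b => G.Adj a b) (fun b => a = v ∧ H.Adj w b.1) b)
             (fun a => Sum.elim (fun b => b = v ∧ H.Adj w a.1) (fun b => H.Adj a.1 b.1) b) a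
  symm := by
    refine ⟨?_⟩
    rintro (a | a) (b | b) h
    · exact G.adj_symm h
    · exact h
    · exact h
    · exact H.adj_symm h
  loopless := by
    refine ⟨?_⟩
    rintro (a | a) h
    · exact G.ne_of_adj h rfl
    · exact H.ne_of_adj h rfl

/-- Disjoint union of two simple graphs. -/
def disjSum {V W : Type} (G : SimpleGraph V) (H : SimpleGraph W) : SimpleGraph (V ⊕ W) where
  Adj a b :=
    Sum.elim (fun a => Sum.elim (fun b => G.Adj a b) (fun _ => False) b)
             (fun a => Sum.elim (fun _ => False) (fun b => H.Adj a b) b) a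
  symm := by
    refine ⟨?_⟩
    rintro (a | a) (b | b) h
    · exact G.adj_symm h
    · exact h.elim
    · exact h.elim
    · exact H.adj_symm h
  loopless := by
    refine ⟨?_⟩
    rintro (a | a) h
    · exact G.ne_of_adj h rfl
    · exact H.ne_of_adj h rfl

/-- Disjoint union `G ∪ H` of bundled graphs. -/
noncomputable def FinGraph.disjU (G H : FinGraph) : FinGraph := FinGraph.of (disjSum G.G H.G)

open Classical in
/-- `C_k ⊕ P_n ⊕ C_l`: two cycles joined by a path with `n` edges; for `n = 0` this is
`C_k ⊕ C_l`, two cycles sharing one vertex. (Junk value if `k = 0` or `l = 0`.) -/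
noncomputable def cpcF (k n l : ℕ) : FinGraph :=
  if h : 0 < k ∧ 0 < l then
    let A := glue (SimpleGraph.cycleGraph k) (SimpleGraph.pathGraph (n+1)) ⟨0, h.1⟩ 0
    let ep : Fin k ⊕ {x : Fin (n+1) // x ≠ 0} :=
      if hn : n = 0 then Sum.inl ⟨0, h.1⟩
      else Sum.inr ⟨Fin.last n, fun hc => hn (by simpa using congrArg Fin.val hc)⟩
    FinGraph.of (glue A (SimpleGraph.cycleGraph l) ep ⟨0, h.2⟩)
  else FinGraph.of (⊥ : SimpleGraph (Fin 0))


lemma exists_int_weights (n : ℕ) (i₀ : Fin n) : ∃ (z : Fin n → ℤ) (d : ℕ), 0 < d ∧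
    ∀ i : Fin n, ∑ j, (z j : ℚ) * ((2:ℚ) ^ (j : ℕ)) ^ (2 * (i : ℕ) + 3)
      = (d : ℚ) * (if i = i₀ then 1 else 0) := by
  classical
  set v : Fin n → ℚ := fun i => 2 ^ (2 * (i : ℕ) + 3) with hv
  have hvinj : Function.Injective v := by
    intro i j hij
    have h2 : ((2 ^ (2 * (i:ℕ) + 3) : ℕ) : ℚ) = ((2 ^ (2 * (j:ℕ) + 3) : ℕ) : ℚ) := by
      push_cast; exact hij
    have h3 := Nat.cast_inj.mp h2
    have h4 := Nat.pow_right_injective (le_refl 2) h3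
    exact Fin.ext (by omega)
  set A := Matrix.vandermonde v with hA
  have hdet : A.det ≠ 0 := by
    rw [hA, Matrix.det_vandermonde_ne_zero_iff]; exact hvinj
  have hu : IsUnit A.det := hdet.isUnit
  set c : Fin n → ℚ := A⁻¹.mulVec (Pi.single i₀ 1) with hcdef
  have hc : A.mulVec c = Pi.single i₀ 1 := by
    rw [hcdef, Matrix.mulVec_mulVec, Matrix.mul_nonsing_inv _ hu, Matrix.one_mulVec]
  set d : ℕ := ∏ j, (c j).den with hd
  have hdpos : 0 < d := Finset.prod_pos (fun j _ => (c j).pos)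
  set z : Fin n → ℤ := fun j => (c j).num * ∏ j' ∈ Finset.univ.erase j, ((c j').den : ℤ) with hz
  have hzq : ∀ j, (z j : ℚ) = (d : ℚ) * c j := by
    intro j
    have hden : ((c j).den : ℚ) ≠ 0 := Nat.cast_ne_zero.mpr (c j).den_nz
    have hnum : ((c j).num : ℚ) = c j * (c j).den := by
      field_simp [Rat.num_div_den]
      rw [Rat.mul_den_eq_num]
    rw [hz]
    push_cast
    rw [hnum, hd]
    push_cast
    rw [← Finset.mul_prod_erase Finset.univ (fun j' => ((c j').den : ℚ)) (Finset.mem_univ j)]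
    ring
  refine ⟨z, d, hdpos, fun i => ?_⟩
  have h1 := congrFun hc i
  have h2 : ∑ j : Fin n, v i ^ (j : ℕ) * c j = (if i = i₀ then 1 else 0) := by
    simpa [hA, Matrix.mulVec, dotProduct, Matrix.vandermonde, Pi.single_apply] using h1
  calc ∑ j : Fin n, (z j : ℚ) * ((2:ℚ) ^ (j:ℕ)) ^ (2 * (i:ℕ) + 3)
      = ∑ j : Fin n, (d : ℚ) * (v i ^ (j:ℕ) * c j) := by
        refine Finset.sum_congr rfl fun j _ => ?_
        rw [hzq, hv, pow_right_comm]
        ring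
    _ = (d : ℚ) * (if i = i₀ then 1 else 0) := by rw [← Finset.mul_sum, h2]

lemma repeat_sum : ∀ (n : ℕ) (N : Fin n → ℕ) (w : Fin n → ℝ), ∃ (m : ℕ) (ω : Fin m → ℝ),
    ∀ l : ℕ, ∑ i, ω i ^ l = ∑ j, (N j : ℝ) * w j ^ l := by
  intro n
  induction n with
  | zero => intro N w; exact ⟨0, Fin.elim0, fun l => by simp⟩
  | succ n ih =>
    intro N w
    obtain ⟨m, ω, hω⟩ := ih (fun j => N j.succ) (fun j => w j.succ)
    refine ⟨N 0 + m, Fin.append (fun _ : Fin (N 0) => w 0) ω, fun l => ?_⟩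
    rw [Fin.sum_univ_add, Fin.sum_univ_succ]
    simp only [Fin.append_left, Fin.append_right, Finset.sum_const, Finset.card_univ,
      Fintype.card_fin, nsmul_eq_mul, hω]

/-- For every pair of odd integers `k₀`, `k` with `3 ≤ k₀ ≤ k`, there exist
`m` and reals `ω₁, …, ω_m` whose `ℓ`-th power sums vanish for every odd `ℓ ≠ k₀` with
`3 ≤ ℓ ≤ k`, while the `k₀`-th power sum is positive. -/
theorem sums_of_powers_zero (k₀ k : ℕ) (hk₀ : Odd k₀) (hk : Odd k)
    (h3 : 3 ≤ k₀) (hle : k₀ ≤ k) :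
    ∃ (m : ℕ) (ω : Fin m → ℝ),
      (∀ l : ℕ, Odd l → l ≠ k₀ → 3 ≤ l → l ≤ k → ∑ i, ω i ^ l = 0) ∧
      0 < ∑ i, ω i ^ k₀ := by
  classical
  obtain ⟨t, ht⟩ := hk
  obtain ⟨a, ha⟩ := hk₀
  set n : ℕ := t with hn
  have hi₀lt : a - 1 < n := by omega
  set i₀ : Fin n := ⟨a - 1, hi₀lt⟩ with hi₀
  obtain ⟨z, d, hdpos, hkey⟩ := exists_int_weights n i₀
  -- real version of the key identity
  have hkeyR : ∀ i : Fin n, ∑ j : Fin n, (z j : ℝ) * ((2:ℝ) ^ (j:ℕ)) ^ (2 * (i:ℕ) + 3)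
      = (d : ℝ) * (if i = i₀ then 1 else 0) := by
    intro i
    have h := congrArg (fun q : ℚ => (q : ℝ)) (hkey i)
    push_cast at h
    convert h using 2
    split <;> simp
  -- the numbers
  set w : Fin n → ℝ := fun j => if 0 ≤ z j then (2:ℝ) ^ (j:ℕ) else -((2:ℝ) ^ (j:ℕ)) with hw
  obtain ⟨m, ω, hω⟩ := repeat_sum n (fun j => (z j).natAbs) w
  have hsum : ∀ l : ℕ, Odd l →
      ∑ i, ω i ^ l = ∑ j : Fin n, (z j : ℝ) * ((2:ℝ) ^ (j:ℕ)) ^ l := by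
    intro l hl
    rw [hω l]
    refine Finset.sum_congr rfl fun j _ => ?_
    rw [hw]
    by_cases h : 0 ≤ z j
    · have hz' : (((z j).natAbs : ℕ) : ℝ) = (z j : ℝ) := by
        rw [Nat.cast_natAbs]
        exact_mod_cast congrArg (fun x : ℤ => (x : ℝ)) (abs_of_nonneg h)
      simp only [h, if_pos, hz']
    · have hz' : (((z j).natAbs : ℕ) : ℝ) = -(z j : ℝ) := by
        rw [Nat.cast_natAbs]
        exact_mod_cast congrArg (fun x : ℤ => (x : ℝ)) (abs_of_nonpos (le_of_not_ge h))
      simp only [h, if_neg, not_false_iff]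
      rw [hl.neg_pow, hz']
      ring
  refine ⟨m, ω, ?_, ?_⟩
  · intro l hl hlk₀ hl3 hlk
    obtain ⟨b, hb⟩ := hl
    have hblt : b - 1 < n := by omega
    have hne : (⟨b - 1, hblt⟩ : Fin n) ≠ i₀ := by
      intro hcon
      apply hlk₀
      have := congrArg Fin.val hcon
      simp [hi₀] at this
      omega
    have := hkeyR ⟨b - 1, hblt⟩
    rw [if_neg hne, mul_zero] at this
    rw [hsum l ⟨b, hb⟩]
    have hexp : 2 * ((⟨b - 1, hblt⟩ : Fin n) : ℕ) + 3 = l := by simp; omega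
    rw [← hexp]
    exact this
  · have hexp : 2 * ((i₀ : Fin n) : ℕ) + 3 = k₀ := by simp [hi₀]; omega
    rw [hsum k₀ ⟨a, ha⟩, ← hexp]
    have := hkeyR i₀
    rw [if_pos rfl, mul_one] at this
    rw [this]
    exact_mod_cast hdpos
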